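/- arXiv:1609.09777 — 3 statements merged into one kernel-verified Lean document; each statement's English description precedes it below -/
import Mathlib

section
/- Let (u_i) be a sequence of complex numbers such that n^{-1/2} max_{1≤i≤n} |u_i| → 0 as n → ∞, and such that the limit S = lim_{n→∞} (1/n) ∑_{i=1}^n u_i exists and is finite. Then lim_{n→∞} ∏_{i=1}^n (1 + u_i/n) = e^S. -/
open Filter Finset

/-- If `n^{-1/2} · max_{1 ≤ i ≤ n} |u i| → 0` and `(1/n) ∑_{i=1}^n u i → S`,
then `∏_{i=1}^n (1 + u i / n) → e^S`. -/
theorem product_exp_limit (u : ℕ → ℂ) (S : ℂ)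
    (hmax : Tendsto (fun n : ℕ =>
      (((Finset.range n).sup fun i => ‖u i‖₊ : NNReal) : ℝ) / Real.sqrt n) atTop (nhds 0))
    (hsum : Tendsto (fun n : ℕ => (1 / (n : ℂ)) * ∑ i ∈ Finset.range n, u i) atTop (nhds S)) :
    Tendsto (fun n : ℕ => ∏ i ∈ Finset.range n, (1 + u i / (n : ℂ))) atTop
      (nhds (Complex.exp S)) := by
  set M : ℕ → ℝ := fun n => (((Finset.range n).sup fun i => ‖u i‖₊ : NNReal) : ℝ) with hMdef
  have hMnn : ∀ n, 0 ≤ M n := fun n => NNReal.coe_nonneg _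
  have hbound : ∀ n, ∀ i ∈ Finset.range n, ‖u i‖ ≤ M n := by
    intro n i hi
    exact_mod_cast NNReal.coe_le_coe.mpr (Finset.le_sup (f := fun i => ‖u i‖₊) hi)
  -- eventually M n / n ≤ 1/2
  have hsmall : ∀ᶠ n : ℕ in atTop, M n / n ≤ 1 / 2 := by
    have h1 : ∀ᶠ n : ℕ in atTop, M n / Real.sqrt n < 1 / 2 :=
      hmax.eventually (eventually_lt_nhds (by norm_num : (0:ℝ) < 1/2))
    filter_upwards [h1, eventually_ge_atTop 1] with n hn hn1
    have hs : Real.sqrt n ≤ n := by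
      nlinarith [Real.sq_sqrt (by positivity : (0:ℝ) ≤ (n:ℝ)),
        Real.sqrt_nonneg (n:ℝ), (by exact_mod_cast hn1 : (1:ℝ) ≤ (n:ℝ))]
    have hs0 : 0 < Real.sqrt n := Real.sqrt_pos.mpr (by exact_mod_cast hn1)
    calc M n / n ≤ M n / Real.sqrt n :=
          div_le_div_of_nonneg_left (hMnn n) hs0 hs |>.trans_eq rfl
      _ ≤ 1/2 := hn.le
  -- the individual terms are small
  have hterm : ∀ᶠ n : ℕ in atTop, ∀ i ∈ Finset.range n, ‖u i / (n:ℂ)‖ ≤ 1 / 2 := by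
    filter_upwards [hsmall, eventually_ge_atTop 1] with n hn hn1 i hi
    have hnp : (0:ℝ) < n := by exact_mod_cast hn1
    rw [norm_div, Complex.norm_natCast]
    exact (by gcongr; exact hbound n i hi : ‖u i‖ / (n:ℝ) ≤ M n / n).trans hn
  -- the error term
  set E : ℕ → ℂ := fun n => ∑ i ∈ Finset.range n, (Complex.log (1 + u i / n) - u i / n)
    with hEdef
  have hE : Tendsto E atTop (nhds 0) := by
    apply squeeze_zero_norm' (a := fun n => (M n / Real.sqrt n) * (M n / Real.sqrt n))
    · filter_upwards [hterm, hsmall, eventually_ge_atTop 1] with n hn hns hn1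
      have hnp : (0:ℝ) < n := by exact_mod_cast hn1
      calc ‖E n‖ ≤ ∑ i ∈ Finset.range n, ‖Complex.log (1 + u i / n) - u i / n‖ :=
            norm_sum_le _ _
        _ ≤ ∑ i ∈ Finset.range n, (M n / n)^2 := by
            apply Finset.sum_le_sum
            intro i hi
            have h2 := hn i hi
            have h1 : ‖u i / (n:ℂ)‖ < 1 := h2.trans_lt (by norm_num)
            refine (Complex.norm_log_one_add_sub_self_le h1).trans ?_
            have hinv : (1 - ‖u i / (n:ℂ)‖)⁻¹ ≤ 2 := by
              rw [inv_le_comm₀ (by linarith) (by norm_num)]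
              linarith
            have hz2 : ‖u i / (n:ℂ)‖^2 ≤ (M n / n)^2 := by
              apply pow_le_pow_left₀ (norm_nonneg _)
              rw [norm_div, Complex.norm_natCast]
              gcongr
              exact hbound n i hi
            calc ‖u i / (n:ℂ)‖ ^ 2 * (1 - ‖u i / (n:ℂ)‖)⁻¹ / 2
                ≤ ‖u i / (n:ℂ)‖ ^ 2 * 2 / 2 := by
                  apply div_le_div_of_nonneg_right _ (by norm_num)
                  exact mul_le_mul_of_nonneg_left hinv (by positivity)
              _ = ‖u i / (n:ℂ)‖ ^ 2 := by ring
              _ ≤ (M n / n)^2 := hz2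
        _ = n * (M n / n)^2 := by rw [Finset.sum_const, Finset.card_range]; simp
        _ = (M n / Real.sqrt n) * (M n / Real.sqrt n) := by
            rw [div_pow, ← Real.sq_sqrt hnp.le]
            field_simp
            rw [Real.sqrt_sq (Real.sqrt_nonneg _)]; ring
    · simpa using hmax.mul hmax
  -- the log sum tends to S
  have hL : Tendsto (fun n : ℕ => ∑ i ∈ Finset.range n, Complex.log (1 + u i / n))
      atTop (nhds S) := by
    have heq : ∀ n : ℕ, ∑ i ∈ Finset.range n, Complex.log (1 + u i / n)
        = (1 / (n:ℂ)) * ∑ i ∈ Finset.range n, u i + E n := by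
      intro n
      rw [hEdef, Finset.mul_sum, ← Finset.sum_add_distrib]
      apply Finset.sum_congr rfl
      intro i _
      rw [one_div, inv_mul_eq_div]
      ring
    simp only [heq]
    simpa using hsum.add hE
  -- conclude
  have hexp : Tendsto (fun n : ℕ =>
      Complex.exp (∑ i ∈ Finset.range n, Complex.log (1 + u i / n))) atTop
      (nhds (Complex.exp S)) := (Complex.continuous_exp.continuousAt.tendsto).comp hL
  apply hexp.congr'
  filter_upwards [hterm] with n hn
  rw [Complex.exp_sum]
  apply Finset.prod_congr rfl
  intro i hi
  apply Complex.exp_log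
  intro h0
  have : ‖u i / (n:ℂ)‖ = 1 := by
    have : u i / (n:ℂ) = -1 := by linear_combination h0
    rw [this]; simp
  linarith [hn i hi, this]
end

section
/- Fix t ∈ ℝ. For each n, let λ_{1,n}, …, λ_{n,n} ≥ 0 satisfy max_k λ_{k,n} = o(n^{1/4}) and (1/(4n)) ∑_{k=1}^n λ_{k,n}² → σ². Then ∏_{k=1}^n cos(t λ_{k,n} / (2√n)) → exp(−σ² t² / 2) as n → ∞. -/
open Filter Finset

lemma cos_half_le {x : ℝ} (hx : |x| ≤ 1/2) : (1:ℝ)/2 ≤ Real.cos x := by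
  have h1 : |x| ≤ 1 := by linarith
  have hb := Real.cos_bound h1
  have hx2 : x^2 ≤ 1/4 := by nlinarith [abs_nonneg x, sq_abs x]
  have habs4 : |x|^4 = x^4 := by rw [← abs_pow]; exact abs_of_nonneg (by positivity)
  rw [habs4] at hb
  have := abs_le.1 hb
  nlinarith [sq_nonneg x]

lemma log_cos_bound {x : ℝ} (hx : |x| ≤ 1/2) :
    |Real.log (Real.cos x) + x^2/2| ≤ 3 * x^4 := by
  have h1 : |x| ≤ 1 := by linarith
  have hb := Real.cos_bound h1
  have habs4 : |x|^4 = x^4 := by rw [← abs_pow]; exact abs_of_nonneg (by positivity)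
  rw [habs4] at hb
  obtain ⟨hb1, hb2⟩ := abs_le.1 hb
  have hx2 : x^2 ≤ 1/4 := by nlinarith [abs_nonneg x, sq_abs x]
  have hc : (1:ℝ)/2 ≤ Real.cos x := cos_half_le hx
  have hcpos : 0 < Real.cos x := by linarith
  have hup : Real.log (Real.cos x) ≤ Real.cos x - 1 :=
    Real.log_le_sub_one_of_pos hcpos
  have hlow : 1 - (Real.cos x)⁻¹ ≤ Real.log (Real.cos x) := by
    have := Real.log_le_sub_one_of_pos (inv_pos.2 hcpos)
    rw [Real.log_inv] at this
    linarith
  have hc1 : Real.cos x ≤ 1 := Real.cos_le_one x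
  have hlow2 : -x ^ 2 / 2 - 3*x^4 ≤ 1 - (Real.cos x)⁻¹ := by
    have key : (Real.cos x)⁻¹ ≤ 1 + x^2/2 + 3*x^4 := by
      rw [inv_eq_one_div, div_le_iff₀ hcpos]
      nlinarith [sq_nonneg x, sq_nonneg (x^2), sq_abs x, sq_nonneg (x*x)]
    linarith
  rw [abs_le]
  constructor
  · nlinarith
  · nlinarith

/-- If `max_k λ_{k,n} = o(n^{1/4})` and `(1/(4n)) ∑_k λ_{k,n}² → σ²`, then for every fixed
`t`, `∏_{k<n} cos(t λ_{k,n}/(2√n)) → exp(−σ² t²/2)`. -/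
theorem prod_cos_tendsto_gaussian_charFun
    (t : ℝ) (l : ℕ → ℕ → ℝ) (σ2 : ℝ)
    (hpos : ∀ n k, k < n → 0 ≤ l n k)
    (hmax : Tendsto (fun n : ℕ =>
      (((Finset.range n).sup fun k => ‖l n k‖₊ : NNReal) : ℝ) / (n : ℝ) ^ ((1 : ℝ) / 4))
      atTop (nhds 0))
    (hvar : Tendsto (fun n : ℕ => (1 / (4 * (n : ℝ))) * ∑ k ∈ Finset.range n, (l n k) ^ 2)
      atTop (nhds σ2)) :
    Tendsto (fun n : ℕ => ∏ k ∈ Finset.range n, Real.cos (t * l n k / (2 * Real.sqrt n)))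
      atTop (nhds (Real.exp (-(σ2 * t ^ 2) / 2))) := by
  set x : ℕ → ℕ → ℝ := fun n k => t * l n k / (2 * Real.sqrt n) with hxdef
  set M : ℕ → ℝ := fun n => (((Finset.range n).sup fun k => ‖l n k‖₊ : NNReal) : ℝ) with hMdef
  set v : ℕ → ℝ := fun n => (1 / (4 * (n : ℝ))) * ∑ k ∈ Finset.range n, (l n k) ^ 2 with hvdef
  have hM0 : ∀ n, 0 ≤ M n := fun n => NNReal.coe_nonneg _
  have hMk : ∀ n k, k < n → |l n k| ≤ M n := by
    intro n k hk
    have : ‖l n k‖₊ ≤ (Finset.range n).sup fun k => ‖l n k‖₊ :=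
      Finset.le_sup (f := fun k => ‖l n k‖₊) (Finset.mem_range.2 hk)
    calc |l n k| = ((‖l n k‖₊ : ℝ)) := by simp [Real.norm_eq_abs]
    _ ≤ M n := NNReal.coe_le_coe.2 this
  -- B n bounds |x n k|, B → 0
  set B : ℕ → ℝ := fun n => |t| * M n / (2 * Real.sqrt n) with hBdef
  have hB0 : ∀ n, 0 ≤ B n := by
    intro n
    apply div_nonneg (mul_nonneg (abs_nonneg t) (hM0 n))
    positivity
  have hMs : Tendsto (fun n => M n / Real.sqrt n) atTop (nhds 0) := by
    apply squeeze_zero' (g := fun n => M n / (n : ℝ) ^ ((1:ℝ)/4)) _ _ hmax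
    · filter_upwards with n
      positivity
    · filter_upwards [eventually_ge_atTop 1] with n hn
      have hn1 : (1:ℝ) ≤ (n:ℝ) := by exact_mod_cast hn
      have h4 : (0:ℝ) < (n:ℝ) ^ ((1:ℝ)/4) := Real.rpow_pos_of_pos (by linarith) _
      have hle : (n:ℝ) ^ ((1:ℝ)/4) ≤ Real.sqrt n := by
        rw [Real.sqrt_eq_rpow]
        exact Real.rpow_le_rpow_of_exponent_le hn1 (by norm_num)
      exact div_le_div_of_nonneg_left (hM0 n) h4 hle
  have hB : Tendsto B atTop (nhds 0) := by
    have : Tendsto (fun n => (|t| / 2) * (M n / Real.sqrt n)) atTop (nhds ((|t|/2) * 0)) :=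
      hMs.const_mul _
    rw [mul_zero] at this
    refine this.congr fun n => ?_
    simp only [hBdef]
    ring
  have hBx : ∀ n k, k < n → |x n k| ≤ B n := by
    intro n k hk
    simp only [hxdef, hBdef]
    rw [abs_div, abs_mul]
    have h2 : |2 * Real.sqrt n| = 2 * Real.sqrt n := abs_of_nonneg (by positivity)
    rw [h2]
    have hnpos : (0:ℝ) < (n:ℝ) := by exact_mod_cast Nat.lt_of_le_of_lt (Nat.zero_le k) hk
    have hs : 0 < 2 * Real.sqrt (n:ℝ) := by positivity
    gcongr
    exact hMk n k hk
  -- sum of squares identity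
  have hsq : ∀ n, ∑ k ∈ Finset.range n, (x n k)^2 / 2 = (t^2/2) * v n := by
    intro n
    rcases Nat.eq_zero_or_pos n with rfl | hn
    · simp [hvdef]
    · have hnpos : (0:ℝ) < (n:ℝ) := by exact_mod_cast hn
      have hs : Real.sqrt n ^ 2 = (n:ℝ) := Real.sq_sqrt hnpos.le
      have hne : (n:ℝ) ≠ 0 := hnpos.ne'
      have : ∀ k, (x n k)^2 / 2 = (t^2 / (8 * n)) * (l n k)^2 := by
        intro k
        simp only [hxdef]
        rw [div_pow, mul_pow, mul_pow, hs]
        field_simp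
        ring
      rw [Finset.sum_congr rfl fun k _ => this k, ← Finset.mul_sum]
      simp only [hvdef]
      field_simp
      ring
  have hS : Tendsto (fun n => ∑ k ∈ Finset.range n, (x n k)^2 / 2) atTop (nhds ((t^2/2) * σ2)) := by
    simp only [hsq]
    exact hvar.const_mul _
  -- eventual smallness
  have hsmall : ∀ᶠ n in atTop, B n ≤ 1/2 := by
    have := hB.eventually (ge_mem_nhds (show (0:ℝ) < 1/2 by norm_num))
    filter_upwards [this] with n hn using hn
  -- error term
  set A : ℕ → ℝ := fun n => ∑ k ∈ Finset.range n, (Real.log (Real.cos (x n k)) + (x n k)^2 / 2) with hAdef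
  have hA : Tendsto A atTop (nhds 0) := by
    apply squeeze_zero_norm' (a := fun n => 3 * B n ^ 2 * (t^2 * v n)) (f := A) ?_ ?_
    · filter_upwards [hsmall] with n hn
      calc ‖A n‖ ≤ ∑ k ∈ Finset.range n, |Real.log (Real.cos (x n k)) + (x n k)^2/2| := by
            rw [Real.norm_eq_abs]; exact Finset.abs_sum_le_sum_abs _ _
      _ ≤ ∑ k ∈ Finset.range n, 3 * B n ^ 2 * (x n k)^2 := by
            apply Finset.sum_le_sum
            intro k hk
            have hk' := Finset.mem_range.1 hk
            have hxk : |x n k| ≤ 1/2 := (hBx n k hk').trans hn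
            have h2 : (x n k)^2 ≤ B n ^ 2 := by
              rw [← sq_abs]
              exact pow_le_pow_left₀ (abs_nonneg _) (hBx n k hk') 2
            calc |Real.log (Real.cos (x n k)) + (x n k)^2/2| ≤ 3 * (x n k)^4 :=
                  log_cos_bound hxk
            _ = 3 * ((x n k)^2 * (x n k)^2) := by ring
            _ ≤ 3 * (B n ^2 * (x n k)^2) := by
                  apply mul_le_mul_of_nonneg_left _ (by norm_num)
                  exact mul_le_mul_of_nonneg_right h2 (sq_nonneg _)
            _ = 3 * B n ^ 2 * (x n k)^2 := by ring
      _ = 3 * B n ^ 2 * ∑ k ∈ Finset.range n, (x n k)^2 := by rw [Finset.mul_sum]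
      _ = 3 * B n ^ 2 * (t^2 * v n) := by
            congr 1
            have := hsq n
            have h2 : ∑ k ∈ Finset.range n, (x n k)^2 = 2 * ((t^2/2) * v n) := by
              rw [← this, Finset.mul_sum]
              apply Finset.sum_congr rfl
              intro k _; ring
            rw [h2]; ring
    · have : Tendsto (fun n => 3 * B n ^ 2 * (t^2 * v n)) atTop (nhds (3 * 0^2 * (t^2 * σ2))) := by
        apply Tendsto.mul
        · exact (tendsto_const_nhds.mul (hB.pow 2))
        · exact hvar.const_mul _
      simpa using this
  -- log sum converges
  have hlogsum : Tendsto (fun n => ∑ k ∈ Finset.range n, Real.log (Real.cos (x n k)))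
      atTop (nhds (-(σ2 * t^2) / 2)) := by
    have h := hA.sub hS
    have heq : ∀ n, A n - ∑ k ∈ Finset.range n, (x n k)^2/2
        = ∑ k ∈ Finset.range n, Real.log (Real.cos (x n k)) := by
      intro n
      simp only [hAdef]
      rw [Finset.sum_add_distrib]
      ring
    have hc : (0:ℝ) - (t^2/2) * σ2 = -(σ2 * t^2)/2 := by ring
    rw [hc] at h
    exact h.congr heq
  -- conclusion
  have hexp : Tendsto (fun n => Real.exp (∑ k ∈ Finset.range n, Real.log (Real.cos (x n k))))
      atTop (nhds (Real.exp (-(σ2 * t^2)/2))) :=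
    (Real.continuous_exp.tendsto _).comp hlogsum
  apply hexp.congr'
  filter_upwards [hsmall] with n hn
  rw [Real.exp_sum]
  apply Finset.prod_congr rfl
  intro k hk
  have hk' := Finset.mem_range.1 hk
  have hxk : |x n k| ≤ 1/2 := (hBx n k hk').trans hn
  have hcpos : 0 < Real.cos (x n k) := lt_of_lt_of_le (by norm_num) (cos_half_le hxk)
  rw [Real.exp_log hcpos]
end

section
/- For each n, let A^{(n)} be a random n×n matrix with entries A_{ij} = a_{ij}/√(W_n) for |i−j| ≤ W_n and A_{ij} = 0 otherwise, where the a_{ij} are i.i.d. real random variables satisfying E[e^{δ|a_{11}|}] < ∞ for some δ > 0, and W_n = o(n^{1/2}) with W_n ≥ 1. Then n^{-1/4} ‖A^{(n)}‖_op → 0 almost surely as n → ∞. -/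
open MeasureTheory ProbabilityTheory Filter Matrix
open scoped ENNReal NNReal

lemma schur_test {n : ℕ} (A : Matrix (Fin n) (Fin n) ℝ) {r : ℝ} (hr : 0 ≤ r)
    (hrow : ∀ i, ∑ j, |A i j| ≤ r) (hcol : ∀ j, ∑ i, |A i j| ≤ r) :
    ‖Matrix.toEuclideanCLM (𝕜 := ℝ) A‖ ≤ r := by
  refine ContinuousLinearMap.opNorm_le_bound _ hr (fun x => ?_)
  have happ : ∀ i, (Matrix.toEuclideanCLM (𝕜 := ℝ) A x) i = ∑ j, A i j * x j := by
    intro i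
    rfl
  have hxnorm : ‖x‖ ^ 2 = ∑ j, (x j) ^ 2 := by
    rw [EuclideanSpace.norm_eq, Real.sq_sqrt (by positivity)]
    simp [sq_abs]
  have key : ‖Matrix.toEuclideanCLM (𝕜 := ℝ) A x‖ ^ 2 ≤ (r * ‖x‖) ^ 2 := by
    rw [EuclideanSpace.norm_eq, Real.sq_sqrt (by positivity)]
    have step1 : ∀ i : Fin n, ‖(Matrix.toEuclideanCLM (𝕜 := ℝ) A x) i‖ ^ 2
        ≤ r * ∑ j, |A i j| * (x j) ^ 2 := by
      intro i
      rw [happ i, Real.norm_eq_abs, sq_abs]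
      have cs : (∑ j, A i j * x j) ^ 2 ≤ (∑ j, |A i j|) * ∑ j, |A i j| * (x j) ^ 2 := by
        have h1 : (∑ j, A i j * x j) ^ 2 ≤ (∑ j, |A i j| * |x j|) ^ 2 := by
          rw [← sq_abs (∑ j, A i j * x j)]
          have := Finset.abs_sum_le_sum_abs (fun j => A i j * x j) Finset.univ
          have h2 : ∀ j, |A i j * x j| = |A i j| * |x j| := fun j => abs_mul _ _
          refine pow_le_pow_left₀ (abs_nonneg _) ?_ 2
          simpa [h2] using this
        refine h1.trans ?_
        have := Finset.sum_mul_sq_le_sq_mul_sq Finset.univ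
          (fun j => Real.sqrt (|A i j|)) (fun j => Real.sqrt (|A i j|) * |x j|)
        have heq : ∀ j : Fin n, Real.sqrt (|A i j|) * (Real.sqrt (|A i j|) * |x j|)
            = |A i j| * |x j| := by
          intro j
          rw [← mul_assoc, Real.mul_self_sqrt (abs_nonneg _)]
        have heq2 : ∀ j : Fin n, (Real.sqrt (|A i j|)) ^ 2 = |A i j| :=
          fun j => Real.sq_sqrt (abs_nonneg _)
        have heq3 : ∀ j : Fin n, (Real.sqrt (|A i j|) * |x j|) ^ 2 = |A i j| * (x j) ^ 2 := by
          intro j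
          rw [mul_pow, Real.sq_sqrt (abs_nonneg _), sq_abs]
        simp only [heq, heq2, heq3] at this
        exact this
      refine cs.trans ?_
      exact mul_le_mul_of_nonneg_right (hrow i)
        (Finset.sum_nonneg fun j _ => mul_nonneg (abs_nonneg _) (sq_nonneg _))
    calc ∑ i, ‖(Matrix.toEuclideanCLM (𝕜 := ℝ) A x) i‖ ^ 2
        ≤ ∑ i : Fin n, r * ∑ j, |A i j| * (x j) ^ 2 :=
          Finset.sum_le_sum fun i _ => step1 i
      _ = r * ∑ j : Fin n, (∑ i, |A i j|) * (x j) ^ 2 := by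
          rw [← Finset.mul_sum, Finset.sum_comm]
          simp_rw [Finset.sum_mul]
      _ ≤ r * ∑ j : Fin n, r * (x j) ^ 2 := by
          refine mul_le_mul_of_nonneg_left (Finset.sum_le_sum fun j _ => ?_) hr
          exact mul_le_mul_of_nonneg_right (hcol j) (sq_nonneg _)
      _ = (r * ‖x‖) ^ 2 := by rw [← Finset.mul_sum, ← hxnorm]; ring
  nlinarith [norm_nonneg (Matrix.toEuclideanCLM (𝕜 := ℝ) A x), mul_nonneg hr (norm_nonneg x)]

lemma band_card (n i w : ℕ) (hw : 1 ≤ w) :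
    ((Finset.range n).filter (fun j : ℕ => |(i : ℤ) - (j : ℤ)| ≤ (w : ℤ))).card ≤ 3 * w := by
  have h1 : ((Finset.range n).filter (fun j : ℕ => |(i : ℤ) - (j : ℤ)| ≤ (w : ℤ))).card
      ≤ (Finset.Icc ((i : ℤ) - w) ((i : ℤ) + w)).card := by
    refine Finset.card_le_card_of_injOn (fun j : ℕ => (j : ℤ)) ?_ ?_
    · intro j hj
      simp only [Finset.mem_coe, Finset.mem_filter] at hj
      show (j:ℤ) ∈ Finset.Icc _ _
      rw [Finset.mem_Icc]
      have := abs_le.mp hj.2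
      omega
    · intro x _ y _ h
      simp only at h
      exact_mod_cast h
  rw [Int.card_Icc] at h1
  omega

lemma summ_aux : Summable (fun n : ℕ => if n = 0 then (0:ℝ) else 4 / (n:ℝ) ^ 2) := by
  have h2 : Summable (fun n : ℕ => 4 * (1 / (n:ℝ) ^ 2)) :=
    (Real.summable_one_div_nat_pow.mpr one_lt_two).mul_left 4
  refine Summable.of_nonneg_of_le (fun n => by positivity) (fun n => ?_) h2
  rcases Nat.eq_zero_or_pos n with h | h
  · simp [h]
  · rw [if_neg h.ne', mul_one_div]

lemma exp_bound_aux {δ M : ℝ} (hδ : 0 < δ) (hM1 : 1 ≤ M) (n w : ℕ) (hn : 1 ≤ n) (hw : 1 ≤ w) :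
    2 * n * (Real.exp (-δ * ((3 * Real.log M + 3) / δ * ((w : ℝ) + Real.log n))) * M ^ (3 * w))
      ≤ 4 / (n : ℝ) ^ 2 := by
  have hMpos : 0 < M := lt_of_lt_of_le one_pos hM1
  have hlogM : 0 ≤ Real.log M := Real.log_nonneg hM1
  have hnpos : (0:ℝ) < n := by exact_mod_cast hn
  have hlogn : 0 ≤ Real.log n := Real.log_nonneg (by exact_mod_cast hn)
  have hwr : (1:ℝ) ≤ w := by exact_mod_cast hw
  have hδt : -δ * ((3 * Real.log M + 3) / δ * ((w : ℝ) + Real.log n))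
      = -((3 * Real.log M + 3) * ((w : ℝ) + Real.log n)) := by
    field_simp
  have hMw : M ^ (3 * w) = Real.exp (((3 * w : ℕ) : ℝ) * Real.log M) := by
    rw [Real.exp_nat_mul, Real.exp_log hMpos]
  rw [hδt, hMw, ← Real.exp_add]
  have hexple : Real.exp (-((3 * Real.log M + 3) * ((w : ℝ) + Real.log n))
      + ((3 * w : ℕ) : ℝ) * Real.log M) ≤ Real.exp (-(3 * Real.log n)) := by
    rw [Real.exp_le_exp]
    push_cast
    nlinarith [mul_nonneg hlogM hlogn]
  have hexpeq : Real.exp (-(3 * Real.log n)) = ((n:ℝ) ^ 3)⁻¹ := by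
    rw [Real.exp_neg]
    congr 1
    rw [show (3:ℝ) * Real.log n = ((3:ℕ):ℝ) * Real.log n by norm_num,
      Real.exp_nat_mul, Real.exp_log hnpos]
  have h1 : 2 * (n:ℝ) * Real.exp (-((3 * Real.log M + 3) * ((w : ℝ) + Real.log n))
      + ((3 * w : ℕ) : ℝ) * Real.log M) ≤ 2 * (n:ℝ) * ((n:ℝ) ^ 3)⁻¹ := by
    refine mul_le_mul_of_nonneg_left ?_ (by positivity)
    rw [← hexpeq]; exact hexple
  refine h1.trans ?_
  rw [show 2 * (n:ℝ) * ((n:ℝ)^3)⁻¹ = 2 / (n:ℝ)^2 by field_simp]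
  gcongr
  norm_num

lemma tendsto_aux (K : ℝ) (W : ℕ → ℕ)
    (hWo : Tendsto (fun n : ℕ => (W n : ℝ) / Real.sqrt n) atTop (nhds 0)) :
    Tendsto (fun n : ℕ => K * (Real.sqrt ((W n : ℝ) / Real.sqrt n)
      + Real.log n / (n : ℝ) ^ ((1 : ℝ) / 4))) atTop (nhds 0) := by
  have h1 : Tendsto (fun n : ℕ => Real.sqrt ((W n : ℝ) / Real.sqrt n)) atTop (nhds 0) := by
    have := (Real.continuous_sqrt.tendsto' 0 0 Real.sqrt_zero).comp hWo
    exact this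
  have h2 : Tendsto (fun n : ℕ => Real.log n / (n : ℝ) ^ ((1 : ℝ) / 4)) atTop (nhds 0) := by
    have hlo := (isLittleO_log_rpow_atTop (by norm_num : (0:ℝ) < 1/4)).tendsto_div_nhds_zero
    exact hlo.comp tendsto_natCast_atTop_atTop
  have := (h1.add h2).const_mul K
  simpa using this

/-- For random band matrices `A^{(n)}_{ij} = a_{ij}/√Wₙ` (for `|i−j| ≤ Wₙ`, zero otherwise)
with i.i.d. entries having an exponential moment, and bandwidth `Wₙ = o(√n)`, `Wₙ ≥ 1`,
the operator norm satisfies `n^{-1/4} ‖A^{(n)}‖_op → 0` almost surely. -/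
theorem band_matrix_opNorm_small
    {Ω : Type*} [MeasurableSpace Ω] (μ : Measure Ω) [IsProbabilityMeasure μ]
    (a : ℕ → ℕ → Ω → ℝ)
    (hmeas : ∀ i j, Measurable (a i j))
    (hindep : iIndepFun (fun q : ℕ × ℕ => a q.1 q.2) μ)
    (hident : ∀ i j, IdentDistrib (a i j) (a 0 0) μ μ)
    (hexp : ∃ δ : ℝ, 0 < δ ∧ Integrable (fun ω => Real.exp (δ * |a 0 0 ω|)) μ)
    (W : ℕ → ℕ) (hW1 : ∀ n, 1 ≤ W n)
    (hWo : Tendsto (fun n : ℕ => (W n : ℝ) / Real.sqrt n) atTop (nhds 0))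
    (A : (n : ℕ) → Ω → Matrix (Fin n) (Fin n) ℝ)
    (hA : ∀ n ω i j, A n ω i j =
      if |(i : ℤ) - (j : ℤ)| ≤ (W n : ℤ) then a (i : ℕ) (j : ℕ) ω / Real.sqrt (W n) else 0) :
    ∀ᵐ ω ∂μ, Tendsto (fun n : ℕ =>
        ‖Matrix.toEuclideanCLM (𝕜 := ℝ) (A n ω)‖ / (n : ℝ) ^ ((1 : ℝ) / 4))
      atTop (nhds 0) := by
  obtain ⟨δ, hδ, hint⟩ := hexp
  set M := ∫ ω, Real.exp (δ * |a 0 0 ω|) ∂μ with hMdef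
  have hM1 : 1 ≤ M := by
    calc (1:ℝ) = ∫ _ω, (1:ℝ) ∂μ := by simp
    _ ≤ M := by
        refine integral_mono (integrable_const 1) hint (fun ω => ?_)
        exact Real.one_le_exp (by positivity)
  have hMpos : 0 < M := lt_of_lt_of_le one_pos hM1
  set X : ℕ × ℕ → Ω → ℝ := fun q ω => |a q.1 q.2 ω| with hXdef
  have hXmeas : ∀ q, Measurable (X q) := fun q => (hmeas q.1 q.2).abs
  have hXindep : iIndepFun X μ :=
    hindep.comp (fun _ => fun x : ℝ => |x|) (fun _ => measurable_abs)
  have hg : Measurable (fun x : ℝ => Real.exp (δ * |x|)) :=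
    Real.measurable_exp.comp (measurable_abs.const_mul δ)
  have hXident : ∀ q : ℕ × ℕ, IdentDistrib (fun ω => Real.exp (δ * X q ω))
      (fun ω => Real.exp (δ * |a 0 0 ω|)) μ μ := fun q =>
    (hident q.1 q.2).comp hg
  have hXint : ∀ q, Integrable (fun ω => Real.exp (δ * X q ω)) μ := fun q =>
    ((hXident q).integrable_iff).mpr hint
  have hXmgf : ∀ q, mgf (X q) μ δ = M := fun q => (hXident q).integral_eq
  have chern : ∀ (s : Finset (ℕ × ℕ)) (t : ℝ),
      (μ {ω | t ≤ ∑ q ∈ s, X q ω}).toReal ≤ Real.exp (-δ * t) * M ^ s.card := by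
    intro s t
    have hsum_int : Integrable (fun ω => Real.exp (δ * (∑ q ∈ s, X q) ω)) μ :=
      hXindep.integrable_exp_mul_sum hXmeas (fun q _ => hXint q)
    have h := measure_ge_le_exp_mul_mgf (μ := μ) (X := ∑ q ∈ s, X q) t hδ.le hsum_int
    rw [hXindep.mgf_sum hXmeas s] at h
    simp only [hXmgf, Finset.prod_const, Finset.sum_apply] at h
    exact h
  -- constants
  set K : ℝ := (3 * Real.log M + 3) / δ with hKdef
  have hK0 : 0 ≤ K := by
    have := Real.log_nonneg hM1
    positivity
  set tt : ℕ → ℝ := fun n => K * ((W n : ℝ) + Real.log n) with httdef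
  -- band finsets and events
  set band : ℕ → ℕ → Finset ℕ :=
    fun n i => (Finset.range n).filter (fun j : ℕ => |(i : ℤ) - (j : ℤ)| ≤ (W n : ℤ)) with hbanddef
  set bandc : ℕ → ℕ → Finset ℕ :=
    fun n j => (Finset.range n).filter (fun i : ℕ => |(i : ℤ) - (j : ℤ)| ≤ (W n : ℤ)) with hbandcdef
  set R : ℕ → ℕ → Set Ω := fun n i => {ω | tt n ≤ ∑ j ∈ band n i, X (i, j) ω} with hRdef
  set C : ℕ → ℕ → Set Ω := fun n j => {ω | tt n ≤ ∑ i ∈ bandc n j, X (i, j) ω} with hCdef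
  set B : ℕ → Set Ω := fun n =>
    (⋃ i ∈ Finset.range n, R n i) ∪ (⋃ j ∈ Finset.range n, C n j) with hBdef
  set e : ℕ → ℝ := fun n => Real.exp (-δ * tt n) * M ^ (3 * W n) with hedef
  have he0 : ∀ n, 0 ≤ e n := fun n => mul_nonneg (Real.exp_pos _).le (by positivity)
  -- single event measure bounds
  have hRbound : ∀ n i, μ (R n i) ≤ ENNReal.ofReal (e n) := by
    intro n i
    have hemb : Function.Injective (fun j : ℕ => ((i, j) : ℕ × ℕ)) := by
      intro x y h; exact congrArg Prod.snd h
    have h := chern ((band n i).map ⟨_, hemb⟩) (tt n)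
    rw [Finset.card_map] at h
    have hsum : ∀ ω, ∑ q ∈ (band n i).map ⟨_, hemb⟩, X q ω = ∑ j ∈ band n i, X (i, j) ω := by
      intro ω; rw [Finset.sum_map]; rfl
    have hset : {ω | tt n ≤ ∑ q ∈ (band n i).map ⟨_, hemb⟩, X q ω} = R n i := by
      ext ω; simp only [hsum, hRdef, Set.mem_setOf_eq]
    rw [hset] at h
    have hcard : Real.exp (-δ * tt n) * M ^ (band n i).card ≤ e n := by
      refine mul_le_mul_of_nonneg_left ?_ (Real.exp_pos _).le
      exact pow_le_pow_right₀ hM1 (band_card n i (W n) (hW1 n))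
    have := (ENNReal.ofReal_toReal (measure_ne_top μ (R n i))).symm
    rw [this]
    exact ENNReal.ofReal_le_ofReal (h.trans hcard)
  have hCbound : ∀ n j, μ (C n j) ≤ ENNReal.ofReal (e n) := by
    intro n j
    have hemb : Function.Injective (fun i : ℕ => ((i, j) : ℕ × ℕ)) := by
      intro x y h; exact congrArg Prod.fst h
    have h := chern ((bandc n j).map ⟨_, hemb⟩) (tt n)
    rw [Finset.card_map] at h
    have hsum : ∀ ω, ∑ q ∈ (bandc n j).map ⟨_, hemb⟩, X q ω = ∑ i ∈ bandc n j, X (i, j) ω := by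
      intro ω; rw [Finset.sum_map]; rfl
    have hset : {ω | tt n ≤ ∑ q ∈ (bandc n j).map ⟨_, hemb⟩, X q ω} = C n j := by
      ext ω; simp only [hsum, hCdef, Set.mem_setOf_eq]
    rw [hset] at h
    have hcardeq : (bandc n j).card ≤ 3 * W n := by
      have : bandc n j = (Finset.range n).filter
          (fun i : ℕ => |(j : ℤ) - (i : ℤ)| ≤ (W n : ℤ)) := by
        simp only [hbandcdef]
        apply Finset.filter_congr
        intro x _
        rw [abs_sub_comm]
      rw [this]
      exact band_card n j (W n) (hW1 n)
    have hcard : Real.exp (-δ * tt n) * M ^ (bandc n j).card ≤ e n := by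
      refine mul_le_mul_of_nonneg_left ?_ (Real.exp_pos _).le
      exact pow_le_pow_right₀ hM1 hcardeq
    have := (ENNReal.ofReal_toReal (measure_ne_top μ (C n j))).symm
    rw [this]
    exact ENNReal.ofReal_le_ofReal (h.trans hcard)
  -- bound on μ (B n)
  have hBbound : ∀ n, μ (B n) ≤ ENNReal.ofReal (if n = 0 then (0:ℝ) else 4 / (n:ℝ) ^ 2) := by
    intro n
    rcases Nat.eq_zero_or_pos n with h0 | h1
    · subst h0
      simp [hBdef]
    · rw [if_neg h1.ne']
      have hmain : μ (B n) ≤ ENNReal.ofReal (2 * n * e n) := by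
        have hu1 : μ (⋃ i ∈ Finset.range n, R n i) ≤ (n : ℝ≥0∞) * ENNReal.ofReal (e n) := by
          refine (measure_biUnion_finset_le _ _).trans ?_
          calc ∑ i ∈ Finset.range n, μ (R n i) ≤ ∑ _i ∈ Finset.range n, ENNReal.ofReal (e n) :=
                Finset.sum_le_sum (fun i _ => hRbound n i)
          _ = (n : ℝ≥0∞) * ENNReal.ofReal (e n) := by
              rw [Finset.sum_const, Finset.card_range, nsmul_eq_mul]
        have hu2 : μ (⋃ j ∈ Finset.range n, C n j) ≤ (n : ℝ≥0∞) * ENNReal.ofReal (e n) := by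
          refine (measure_biUnion_finset_le _ _).trans ?_
          calc ∑ j ∈ Finset.range n, μ (C n j) ≤ ∑ _j ∈ Finset.range n, ENNReal.ofReal (e n) :=
                Finset.sum_le_sum (fun j _ => hCbound n j)
          _ = (n : ℝ≥0∞) * ENNReal.ofReal (e n) := by
              rw [Finset.sum_const, Finset.card_range, nsmul_eq_mul]
        refine (measure_union_le _ _).trans ?_
        refine (add_le_add hu1 hu2).trans ?_
        rw [← two_mul, ← mul_assoc]
        have : (2 : ℝ≥0∞) * (n : ℝ≥0∞) = ENNReal.ofReal (2 * (n:ℝ)) := by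
          rw [ENNReal.ofReal_mul (by norm_num)]
          simp [ENNReal.ofReal_natCast]
        rw [this, ← ENNReal.ofReal_mul (by positivity)]
      refine hmain.trans (ENNReal.ofReal_le_ofReal ?_)
      exact exp_bound_aux hδ hM1 n (W n) h1 (hW1 n)
  -- Borel-Cantelli
  have htsum : ∑' n, μ (B n) ≠ ⊤ := by
    have hle := ENNReal.tsum_le_tsum hBbound
    refine ne_top_of_le_ne_top ?_ hle
    rw [← ENNReal.ofReal_tsum_of_nonneg (fun n => by positivity) summ_aux]
    exact ENNReal.ofReal_ne_top
  have hBC := MeasureTheory.ae_finite_setOf_mem (μ := μ) htsum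
  filter_upwards [hBC] with ω hω
  have hgood : ∀ᶠ n in atTop, ω ∉ B n := by
    have := hω.eventually_cofinite_notMem
    rwa [Nat.cofinite_eq_atTop] at this
  -- squeeze
  refine squeeze_zero' (Eventually.of_forall (fun n => by positivity)) ?_ (tendsto_aux K W hWo)
  filter_upwards [hgood, eventually_ge_atTop 1] with n hn hn1
  -- from ω ∉ B n extract row/col sum bounds
  have hnotR : ∀ i, i ∈ Finset.range n → ∑ j ∈ band n i, X (i, j) ω < tt n := by
    intro i hi
    by_contra h
    push_neg at h
    exact hn (Set.mem_union_left _ (Set.mem_biUnion hi h))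
  have hnotC : ∀ j, j ∈ Finset.range n → ∑ i ∈ bandc n j, X (i, j) ω < tt n := by
    intro j hj
    by_contra h
    push_neg at h
    exact hn (Set.mem_union_right _ (Set.mem_biUnion hj h))
  have hsqW : (0:ℝ) < Real.sqrt (W n) := Real.sqrt_pos.mpr (by exact_mod_cast hW1 n)
  have hsqW1 : (1:ℝ) ≤ Real.sqrt (W n) := by
    rw [Real.one_le_sqrt]
    exact_mod_cast hW1 n
  have hlogn : 0 ≤ Real.log n := Real.log_nonneg (by exact_mod_cast hn1)
  have htt0 : 0 ≤ tt n := mul_nonneg hK0 (by positivity)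
  -- row sums of the matrix
  have hrowsum : ∀ i : Fin n, ∑ j, |A n ω i j|
      = (∑ j ∈ band n (i : ℕ), X ((i : ℕ), j) ω) / Real.sqrt (W n) := by
    intro i
    have habs : ∀ j : Fin n, |A n ω i j| =
        if |((i:ℕ) : ℤ) - ((j:ℕ) : ℤ)| ≤ (W n : ℤ) then |a (i:ℕ) (j:ℕ) ω| / Real.sqrt (W n)
        else 0 := by
      intro j
      rw [hA]
      split
      · rw [abs_div, abs_of_nonneg (Real.sqrt_nonneg _)]
      · exact abs_zero
    simp only [habs]
    rw [Fin.sum_univ_eq_sum_range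
      (fun j : ℕ => if |((i:ℕ) : ℤ) - (j : ℤ)| ≤ (W n : ℤ)
        then |a (i:ℕ) j ω| / Real.sqrt (W n) else 0) n]
    rw [← Finset.sum_filter, ← Finset.sum_div]
  have hcolsum : ∀ j : Fin n, ∑ i, |A n ω i j|
      = (∑ i ∈ bandc n (j : ℕ), X (i, (j : ℕ)) ω) / Real.sqrt (W n) := by
    intro j
    have habs : ∀ i : Fin n, |A n ω i j| =
        if |((i:ℕ) : ℤ) - ((j:ℕ) : ℤ)| ≤ (W n : ℤ) then |a (i:ℕ) (j:ℕ) ω| / Real.sqrt (W n)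
        else 0 := by
      intro i
      rw [hA]
      split
      · rw [abs_div, abs_of_nonneg (Real.sqrt_nonneg _)]
      · exact abs_zero
    simp only [habs]
    rw [Fin.sum_univ_eq_sum_range
      (fun i : ℕ => if |(i : ℤ) - ((j:ℕ) : ℤ)| ≤ (W n : ℤ)
        then |a i (j:ℕ) ω| / Real.sqrt (W n) else 0) n]
    rw [← Finset.sum_filter, ← Finset.sum_div]
  -- apply Schur test
  have hnorm : ‖Matrix.toEuclideanCLM (𝕜 := ℝ) (A n ω)‖ ≤ tt n / Real.sqrt (W n) := by
    refine schur_test _ (by positivity) (fun i => ?_) (fun j => ?_)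
    · rw [hrowsum i]
      have := (hnotR (i : ℕ) (Finset.mem_range.mpr i.isLt)).le
      gcongr
    · rw [hcolsum j]
      have := (hnotC (j : ℕ) (Finset.mem_range.mpr j.isLt)).le
      gcongr
  -- final deterministic bound
  have hx4 : (0:ℝ) < (n:ℝ) ^ ((1:ℝ)/4) := by
    have : (0:ℝ) < (n:ℝ) := by exact_mod_cast hn1
    positivity
  calc ‖Matrix.toEuclideanCLM (𝕜 := ℝ) (A n ω)‖ / (n : ℝ) ^ ((1 : ℝ) / 4)
      ≤ (tt n / Real.sqrt (W n)) / (n : ℝ) ^ ((1 : ℝ) / 4) := by gcongr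
    _ = K * (((W n : ℝ) + Real.log n) / (Real.sqrt (W n) * (n : ℝ) ^ ((1 : ℝ) / 4))) := by
        rw [httdef]
        rw [div_div, mul_div_assoc]
    _ ≤ K * (Real.sqrt ((W n : ℝ) / Real.sqrt n) + Real.log n / (n : ℝ) ^ ((1 : ℝ) / 4)) := by
        refine mul_le_mul_of_nonneg_left ?_ hK0
        rw [add_div]
        have hterm1 : (W n : ℝ) / (Real.sqrt (W n) * (n : ℝ) ^ ((1 : ℝ) / 4))
            = Real.sqrt ((W n : ℝ) / Real.sqrt n) := by
          rw [← div_div, Real.div_sqrt]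
          rw [Real.sqrt_div (by positivity) (Real.sqrt n)]
          congr 1
          rw [Real.sqrt_eq_rpow (Real.sqrt n), Real.sqrt_eq_rpow (n:ℝ),
            ← Real.rpow_mul (Nat.cast_nonneg n)]
          norm_num
        have hterm2 : Real.log n / (Real.sqrt (W n) * (n : ℝ) ^ ((1 : ℝ) / 4))
            ≤ Real.log n / (n : ℝ) ^ ((1 : ℝ) / 4) := by
          refine div_le_div_of_nonneg_left hlogn hx4 ?_
          nlinarith
        rw [hterm1]
        exact add_le_add le_rfl hterm2
end
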